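/- Let z₁,…,z_n be i.i.d. uniform on {1,…,K}, let H be a graph on vertex set V ⊆ [n] with 1, 2 ∈ V whose components not containing 1 or 2 number cc ≥ 1, and let A be the event that every edge of H is monochromatic and z₁ = z₂. On A, the number ℓ(z) of distinct labels appearing on V satisfies ℓ(z) − 1 ∈ {0, 1, …, cc}, and for every integer x ∈ {0,…,cc}, P(ℓ(z) − 1 = x | A) ≤ cc^{cc} · K^{−(cc − x)}. -/

import Mathlib

open SimpleGraph

namespace Stmt13Aux

variable {n : ℕ} (H : SimpleGraph (Fin n)) (V : Finset (Fin n))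
abbrev G : SimpleGraph (V : Set (Fin n)) := H.induce (V : Set (Fin n))
abbrev Γ := (G H V).ConnectedComponent
variable {H V}
def cmp (u : (V : Set (Fin n))) : Γ H V := (G H V).connectedComponentMk u
noncomputable def rep (C : Γ H V) : (V : Set (Fin n)) := C.out
lemma cmp_rep (C : Γ H V) : cmp (rep C) = C := C.out_eq


lemma walk_const {K : ℕ} {z : Fin n → Fin K} (hz : ∀ x y, H.Adj x y → z x = z y) :
    ∀ {u v : (V : Set (Fin n))}, (G H V).Walk u v → z u.val = z v.val
  | _, _, .nil => rfl
  | _, _, .cons hadj p => (hz _ _ hadj).trans (walk_const hz p)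

lemma const_on_comp {K : ℕ} {z : Fin n → Fin K} (hz : ∀ x y, H.Adj x y → z x = z y)
    {u v : (V : Set (Fin n))} (h : cmp u = cmp (H := H) v) : z u.val = z v.val := by
  obtain ⟨w⟩ := SimpleGraph.ConnectedComponent.exact h
  exact walk_const hz w

section Two
variable (H V) (v1 v2 : Fin n) (hv1 : v1 ∈ V) (hv2 : v2 ∈ V)
def FreeSet : Set (Γ H V) :=
  {C | (⟨v1, by simpa using hv1⟩ : (V : Set (Fin n))) ∉ C.supp ∧
       (⟨v2, by simpa using hv2⟩ : (V : Set (Fin n))) ∉ C.supp}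
noncomputable def T' : Finset (Γ H V) := (Set.toFinite (FreeSet H V v1 v2 hv1 hv2)).toFinset
noncomputable def lab {K : ℕ} (z : Fin n → Fin K) (C : Γ H V) : Fin K := z (rep C).val
noncomputable def Dz {K : ℕ} (z : Fin n → Fin K) : Finset (Fin K) :=
  ((T' H V v1 v2 hv1 hv2).image (lab H V z)).erase (z v1)

open Classical in
noncomputable def Phi {K : ℕ} (x : ℕ)
    (p : (Fin n → Fin K) × (↥(T' H V v1 v2 hv1 hv2) → Fin K)) :
    (Fin n → Fin K) × ((↥(T' H V v1 v2 hv1 hv2) → Fin (x+1)) × (Fin x → Fin K)) :=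
  ⟨fun u => if h : ∃ hu : u ∈ (V : Set (Fin n)), cmp (H := H) ⟨u, hu⟩ ∈ T' H V v1 v2 hv1 hv2
      then p.2 ⟨cmp ⟨u, h.choose⟩, h.choose_spec⟩ else p.1 u,
   fun C => if hb : lab H V p.1 (C : Γ H V) ∈ Dz H V v1 v2 hv1 hv2 p.1 ∧
        (Dz H V v1 v2 hv1 hv2 p.1).card = x
      then Fin.succ (((Dz H V v1 v2 hv1 hv2 p.1).orderIsoOfFin hb.2).symm ⟨_, hb.1⟩) else 0,
   fun i => if hD : (Dz H V v1 v2 hv1 hv2 p.1).card = x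
      then (((Dz H V v1 v2 hv1 hv2 p.1).orderIsoOfFin hD) i : Fin K) else p.1 v1⟩

variable {H V v1 v2}

lemma mem_T' {C : Γ H V} : C ∈ T' H V v1 v2 hv1 hv2 ↔
    (⟨v1, by simpa using hv1⟩ : (V : Set (Fin n))) ∉ C.supp ∧
    (⟨v2, by simpa using hv2⟩ : (V : Set (Fin n))) ∉ C.supp := by
  simp [T', FreeSet]

lemma Phi_fst_v1 {K : ℕ} (x : ℕ) (p : (Fin n → Fin K) × _) :
    (Phi H V v1 v2 hv1 hv2 x p).1 v1 = p.1 v1 := by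
  have hcond : ¬ ∃ hu : v1 ∈ (V : Set (Fin n)),
      cmp (H := H) ⟨v1, hu⟩ ∈ T' H V v1 v2 hv1 hv2 := by
    rintro ⟨hu, hC⟩
    exact ((mem_T' hv1 hv2).mp hC).1 ((SimpleGraph.ConnectedComponent.mem_supp_iff _ _).mpr rfl)
  simp only [Phi]
  exact dif_neg hcond

lemma Phi_fst_v2 {K : ℕ} (x : ℕ) (p : (Fin n → Fin K) × _) :
    (Phi H V v1 v2 hv1 hv2 x p).1 v2 = p.1 v2 := by
  have hcond : ¬ ∃ hu : v2 ∈ (V : Set (Fin n)),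
      cmp (H := H) ⟨v2, hu⟩ ∈ T' H V v1 v2 hv1 hv2 := by
    rintro ⟨hu, hC⟩
    exact ((mem_T' hv1 hv2).mp hC).2 ((SimpleGraph.ConnectedComponent.mem_supp_iff _ _).mpr rfl)
  simp only [Phi]
  exact dif_neg hcond

lemma Phi_fst_free {K : ℕ} (x : ℕ) (p : (Fin n → Fin K) × _)
    {u : Fin n} (hu : u ∈ (V : Set (Fin n))) (hC : cmp (H := H) ⟨u, hu⟩ ∈ T' H V v1 v2 hv1 hv2) :
    (Phi H V v1 v2 hv1 hv2 x p).1 u = p.2 ⟨cmp ⟨u, hu⟩, hC⟩ := by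
  have h : ∃ hu : u ∈ (V : Set (Fin n)), cmp (H := H) ⟨u, hu⟩ ∈ T' H V v1 v2 hv1 hv2 := ⟨hu, hC⟩
  simp only [Phi]
  exact (dif_pos h).trans rfl

lemma Phi_fst_nonfree {K : ℕ} (x : ℕ) (p : (Fin n → Fin K) × _)
    {u : Fin n}
    (h : ¬ ∃ hu : u ∈ (V : Set (Fin n)), cmp (H := H) ⟨u, hu⟩ ∈ T' H V v1 v2 hv1 hv2) :
    (Phi H V v1 v2 hv1 hv2 x p).1 u = p.1 u := by
  simp only [Phi]; exact dif_neg h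


lemma lab_cmp {K : ℕ} {z : Fin n → Fin K} (hz : ∀ x y, H.Adj x y → z x = z y)
    (u : (V : Set (Fin n))) : lab H V z (cmp (H := H) u) = z u.val :=
  const_on_comp hz (cmp_rep (cmp u))

lemma adj_G {a b : Fin n} (hab : H.Adj a b) (ha : a ∈ (V : Set (Fin n)))
    (hb : b ∈ (V : Set (Fin n))) : (G H V).Adj ⟨a, ha⟩ ⟨b, hb⟩ := hab

lemma cmp_adj {a b : Fin n} (hab : H.Adj a b) (ha : a ∈ (V : Set (Fin n)))
    (hb : b ∈ (V : Set (Fin n))) : cmp (H := H) ⟨a, ha⟩ = cmp (H := H) ⟨b, hb⟩ :=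
  SimpleGraph.ConnectedComponent.sound (adj_G hab ha hb).reachable

lemma Phi_mem {K : ℕ} (x : ℕ) (p : (Fin n → Fin K) × _)
    (hsupp : ∀ x y, H.Adj x y → x ∈ V ∧ y ∈ V)
    (hz : ∀ a b, H.Adj a b → p.1 a = p.1 b) (hz12 : p.1 v1 = p.1 v2) :
    (∀ a b, H.Adj a b → (Phi H V v1 v2 hv1 hv2 x p).1 a = (Phi H V v1 v2 hv1 hv2 x p).1 b) ∧
      (Phi H V v1 v2 hv1 hv2 x p).1 v1 = (Phi H V v1 v2 hv1 hv2 x p).1 v2 := by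
  constructor
  · intro a b hab
    obtain ⟨ha, hb⟩ := hsupp a b hab
    have ha' : a ∈ (V : Set (Fin n)) := by simpa using ha
    have hb' : b ∈ (V : Set (Fin n)) := by simpa using hb
    have hcmp := cmp_adj hab ha' hb'
    by_cases h : cmp (H := H) ⟨a, ha'⟩ ∈ T' H V v1 v2 hv1 hv2
    · have hCb : cmp (H := H) ⟨b, hb'⟩ ∈ T' H V v1 v2 hv1 hv2 := hcmp ▸ h
      rw [Phi_fst_free hv1 hv2 x p ha' h, Phi_fst_free hv1 hv2 x p hb' hCb]
      exact congrArg p.2 (Subtype.ext hcmp)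
    · have h1 : ¬ ∃ hu : a ∈ (V : Set (Fin n)),
          cmp (H := H) ⟨a, hu⟩ ∈ T' H V v1 v2 hv1 hv2 := by rintro ⟨hu, hC⟩; exact h hC
      have h2 : ¬ ∃ hu : b ∈ (V : Set (Fin n)),
          cmp (H := H) ⟨b, hu⟩ ∈ T' H V v1 v2 hv1 hv2 := by
        rintro ⟨hu, hC⟩; exact h (hcmp ▸ hC)
      rw [Phi_fst_nonfree hv1 hv2 x p h1, Phi_fst_nonfree hv1 hv2 x p h2]
      exact hz a b hab
  · rw [Phi_fst_v1, Phi_fst_v2]; exact hz12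

lemma Phi_snd_pos {K : ℕ} {x : ℕ} (p : (Fin n → Fin K) × _)
    (hD : (Dz H V v1 v2 hv1 hv2 p.1).card = x) {C : Γ H V} (hC : C ∈ T' H V v1 v2 hv1 hv2)
    (hb : lab H V p.1 C ∈ Dz H V v1 v2 hv1 hv2 p.1) :
    (Phi H V v1 v2 hv1 hv2 x p).2.1 ⟨C, hC⟩ =
      Fin.succ (((Dz H V v1 v2 hv1 hv2 p.1).orderIsoOfFin hD).symm ⟨lab H V p.1 C, hb⟩) := by
  simp only [Phi]
  rw [dif_pos (⟨hb, hD⟩ : _ ∧ _)]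

lemma Phi_snd_neg {K : ℕ} {x : ℕ} (p : (Fin n → Fin K) × _)
    {C : Γ H V} (hC : C ∈ T' H V v1 v2 hv1 hv2)
    (h : lab H V p.1 C ∉ Dz H V v1 v2 hv1 hv2 p.1) :
    (Phi H V v1 v2 hv1 hv2 x p).2.1 ⟨C, hC⟩ = 0 := by
  simp only [Phi]
  exact dif_neg (fun hh => h hh.1)

lemma Phi_thd {K : ℕ} {x : ℕ} (p : (Fin n → Fin K) × _)
    (hD : (Dz H V v1 v2 hv1 hv2 p.1).card = x) (i : Fin x) :
    (Phi H V v1 v2 hv1 hv2 x p).2.2 i =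
      (((Dz H V v1 v2 hv1 hv2 p.1).orderIsoOfFin hD) i : Fin K) := by
  simp only [Phi]
  rw [dif_pos hD]

lemma lab_eq_v1_of_not_mem {K : ℕ} {z : Fin n → Fin K} {C : Γ H V}
    (hC : C ∈ T' H V v1 v2 hv1 hv2) (hb : lab H V z C ∉ Dz H V v1 v2 hv1 hv2 z) :
    lab H V z C = z v1 := by
  by_contra hne
  exact hb (Finset.mem_erase.mpr ⟨hne, Finset.mem_image_of_mem _ hC⟩)

lemma Phi_inj {K : ℕ} (x : ℕ) :
    Set.InjOn (Phi H V v1 v2 hv1 hv2 x)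
      {p : (Fin n → Fin K) × _ | (∀ a b, H.Adj a b → p.1 a = p.1 b) ∧
        (Dz H V v1 v2 hv1 hv2 p.1).card = x} := by
  rintro p ⟨hpz, hpD⟩ q ⟨hqz, hqD⟩ hEq
  have h1 : (Phi H V v1 v2 hv1 hv2 x p).1 = (Phi H V v1 v2 hv1 hv2 x q).1 :=
    congrArg Prod.fst hEq
  have h2 : (Phi H V v1 v2 hv1 hv2 x p).2.1 = (Phi H V v1 v2 hv1 hv2 x q).2.1 :=
    congrArg (fun r => r.2.1) hEq
  have h3 : (Phi H V v1 v2 hv1 hv2 x p).2.2 = (Phi H V v1 v2 hv1 hv2 x q).2.2 :=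
    congrArg (fun r => r.2.2) hEq
  have hv1eq : p.1 v1 = q.1 v1 := by
    rw [← Phi_fst_v1 hv1 hv2 x p, h1, Phi_fst_v1 hv1 hv2 x q]
  have hlab : ∀ C ∈ T' H V v1 v2 hv1 hv2, lab H V p.1 C = lab H V q.1 C := by
    intro C hC
    have hfp := congrFun h2 ⟨C, hC⟩
    by_cases hb : lab H V p.1 C ∈ Dz H V v1 v2 hv1 hv2 p.1
    · by_cases hbq : lab H V q.1 C ∈ Dz H V v1 v2 hv1 hv2 q.1
      · rw [Phi_snd_pos hv1 hv2 p hpD hC hb, Phi_snd_pos hv1 hv2 q hqD hC hbq] at hfp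
        have hidx := (Fin.succ_inj).mp hfp
        have hval := congrFun h3 (((Dz H V v1 v2 hv1 hv2 p.1).orderIsoOfFin hpD).symm
          ⟨lab H V p.1 C, hb⟩)
        rw [Phi_thd hv1 hv2 p hpD, Phi_thd hv1 hv2 q hqD] at hval
        have e1 : (((Dz H V v1 v2 hv1 hv2 p.1).orderIsoOfFin hpD)
            (((Dz H V v1 v2 hv1 hv2 p.1).orderIsoOfFin hpD).symm ⟨lab H V p.1 C, hb⟩) : Fin K)
            = lab H V p.1 C := by
          rw [OrderIso.apply_symm_apply]
        have e2 : (((Dz H V v1 v2 hv1 hv2 q.1).orderIsoOfFin hqD)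
            (((Dz H V v1 v2 hv1 hv2 q.1).orderIsoOfFin hqD).symm ⟨lab H V q.1 C, hbq⟩) : Fin K)
            = lab H V q.1 C := by
          rw [OrderIso.apply_symm_apply]
        rw [← e1, ← e2, ← hidx]
        exact hval
      · rw [Phi_snd_pos hv1 hv2 p hpD hC hb, Phi_snd_neg hv1 hv2 q hC hbq] at hfp
        exact absurd hfp (Fin.succ_ne_zero _)
    · have hbq : lab H V q.1 C ∉ Dz H V v1 v2 hv1 hv2 q.1 := by
        intro hbq
        rw [Phi_snd_neg hv1 hv2 p hC hb, Phi_snd_pos hv1 hv2 q hqD hC hbq] at hfp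
        exact absurd hfp.symm (Fin.succ_ne_zero _)
      rw [lab_eq_v1_of_not_mem hv1 hv2 hC hb, lab_eq_v1_of_not_mem hv1 hv2 hC hbq, hv1eq]
  have hz : p.1 = q.1 := by
    funext u
    by_cases h : ∃ hu : u ∈ (V : Set (Fin n)), cmp (H := H) ⟨u, hu⟩ ∈ T' H V v1 v2 hv1 hv2
    · obtain ⟨hu, hC⟩ := h
      have hp1 : p.1 u = lab H V p.1 (cmp (H := H) ⟨u, hu⟩) := (lab_cmp hpz ⟨u, hu⟩).symm
      have hq1 : q.1 u = lab H V q.1 (cmp (H := H) ⟨u, hu⟩) := (lab_cmp hqz ⟨u, hu⟩).symm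
      rw [hp1, hq1, hlab _ hC]
    · rw [← Phi_fst_nonfree hv1 hv2 x p h, h1, Phi_fst_nonfree hv1 hv2 x q h]
  have hw : p.2 = q.2 := by
    funext C
    obtain ⟨C, hC⟩ := C
    have hrp : ((rep C).val : Fin n) ∈ (V : Set (Fin n)) := (rep C).prop
    have hcr : cmp (H := H) ⟨(rep C).val, hrp⟩ = C := cmp_rep C
    have hCm : cmp (H := H) ⟨(rep C).val, hrp⟩ ∈ T' H V v1 v2 hv1 hv2 := by rw [hcr]; exact hC
    have ep := Phi_fst_free hv1 hv2 x p hrp hCm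
    have eq' := Phi_fst_free hv1 hv2 x q hrp hCm
    have : p.2 ⟨cmp (H := H) ⟨(rep C).val, hrp⟩, hCm⟩ =
        q.2 ⟨cmp (H := H) ⟨(rep C).val, hrp⟩, hCm⟩ := by
      rw [← ep, ← eq', h1]
    have hsub : (⟨cmp (H := H) ⟨(rep C).val, hrp⟩, hCm⟩ :
        ↥(T' H V v1 v2 hv1 hv2)) = ⟨C, hC⟩ := Subtype.ext hcr
    rwa [hsub] at this
  exact Prod.ext hz hw

lemma image_eq {K : ℕ} {z : Fin n → Fin K} (hz : ∀ x y, H.Adj x y → z x = z y)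
    (hz12 : z v1 = z v2) :
    V.image z = insert (z v1) ((T' H V v1 v2 hv1 hv2).image (lab H V z)) := by
  classical
  apply Finset.Subset.antisymm
  · intro b hb
    obtain ⟨u, hu, rfl⟩ := Finset.mem_image.mp hb
    set uu : (V : Set (Fin n)) := ⟨u, by simpa using hu⟩ with huu
    by_cases hC : cmp (H := H) uu ∈ T' H V v1 v2 hv1 hv2
    · exact Finset.mem_insert_of_mem (Finset.mem_image.mpr ⟨_, hC, lab_cmp hz uu⟩)
    · rw [mem_T' hv1 hv2] at hC
      push_neg at hC
      rcases Classical.em ((⟨v1, by simpa using hv1⟩ : (V : Set (Fin n)))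
          ∈ (cmp (H := H) uu).supp) with h1 | h1
      · rw [SimpleGraph.ConnectedComponent.mem_supp_iff] at h1
        exact Finset.mem_insert.mpr (Or.inl (const_on_comp hz h1).symm)
      · have h2 := hC h1
        rw [SimpleGraph.ConnectedComponent.mem_supp_iff] at h2
        refine Finset.mem_insert.mpr (Or.inl ?_)
        rw [← const_on_comp hz h2, hz12]
  · intro b hb
    rcases Finset.mem_insert.mp hb with rfl | hb
    · exact Finset.mem_image_of_mem z hv1
    · obtain ⟨C, _, rfl⟩ := Finset.mem_image.mp hb
      exact Finset.mem_image.mpr ⟨(rep C).val, by simpa using (rep C).prop, rfl⟩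

lemma card_image_eq {K : ℕ} {z : Fin n → Fin K} (hz : ∀ x y, H.Adj x y → z x = z y)
    (hz12 : z v1 = z v2) :
    (V.image z).card = (Dz H V v1 v2 hv1 hv2 z).card + 1 := by
  classical
  rw [image_eq hv1 hv2 hz hz12]
  have h2 : insert (z v1) ((T' H V v1 v2 hv1 hv2).image (lab H V z)) =
      insert (z v1) (Dz H V v1 v2 hv1 hv2 z) := by
    unfold Dz
    ext b
    by_cases hb : b = z v1 <;> simp [hb]
  rw [h2]
  exact Finset.card_insert_of_notMem (by unfold Dz; exact Finset.notMem_erase _ _)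

lemma Dz_card_le {K : ℕ} (z : Fin n → Fin K) :
    (Dz H V v1 v2 hv1 hv2 z).card ≤ (T' H V v1 v2 hv1 hv2).card :=
  le_trans (Finset.card_le_card (Finset.erase_subset _ _)) (Finset.card_image_le)

open Classical in
lemma count_ineq {K : ℕ} [NeZero K] (x : ℕ)
    (hsupp : ∀ a b, H.Adj a b → a ∈ V ∧ b ∈ V) :
    (Finset.univ.filter (fun z : Fin n → Fin K =>
        ((∀ a b, H.Adj a b → z a = z b) ∧ z v1 = z v2) ∧
          (Dz H V v1 v2 hv1 hv2 z).card = x)).card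
        * K ^ (T' H V v1 v2 hv1 hv2).card
      ≤ (Finset.univ.filter (fun z : Fin n → Fin K =>
        (∀ a b, H.Adj a b → z a = z b) ∧ z v1 = z v2)).card
        * ((x+1) ^ (T' H V v1 v2 hv1 hv2).card * K ^ x) := by
  classical
  set S1 := (Finset.univ.filter (fun z : Fin n → Fin K =>
      ((∀ a b, H.Adj a b → z a = z b) ∧ z v1 = z v2) ∧
        (Dz H V v1 v2 hv1 hv2 z).card = x))
    ×ˢ (Finset.univ : Finset (↥(T' H V v1 v2 hv1 hv2) → Fin K)) with hS1
  set S2 := (Finset.univ.filter (fun z : Fin n → Fin K =>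
      (∀ a b, H.Adj a b → z a = z b) ∧ z v1 = z v2))
    ×ˢ (Finset.univ : Finset ((↥(T' H V v1 v2 hv1 hv2) → Fin (x+1)) × (Fin x → Fin K)))
    with hS2
  have hcard : S1.card ≤ S2.card := by
    apply Finset.card_le_card_of_injOn (Phi H V v1 v2 hv1 hv2 x)
    · intro p hp
      simp only [hS1, Finset.mem_coe, Finset.mem_product, Finset.mem_filter] at hp
      obtain ⟨⟨-, ⟨hz, hz12⟩, -⟩, -⟩ := hp
      rw [Finset.mem_coe, hS2, Finset.mem_product, Finset.mem_filter]
      exact ⟨⟨Finset.mem_univ _, Phi_mem hv1 hv2 x p hsupp hz hz12⟩, Finset.mem_univ _⟩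
    · intro p hp q hq hEq
      rw [Finset.mem_coe, Finset.mem_product, Finset.mem_filter] at hp hq
      exact Phi_inj hv1 hv2 x ⟨hp.1.2.1.1, hp.1.2.2⟩ ⟨hq.1.2.1.1, hq.1.2.2⟩ hEq
  rw [hS1, hS2] at hcard
  rw [Finset.card_product, Finset.card_product] at hcard
  simpa [Fintype.card_fun, Fintype.card_coe, Fintype.card_prod, Fintype.card_fin] using hcard

end Two
end Stmt13Aux

open scoped ProbabilityTheory

instance (K : ℕ) [NeZero K] : Nonempty (Fin K) :=
  ⟨⟨0, Nat.pos_of_ne_zero (NeZero.ne K)⟩⟩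

theorem stmt_13 (n K : ℕ) [NeZero K] (H : SimpleGraph (Fin n))
    (V : Finset (Fin n)) (v1 v2 : Fin n) (hv1 : v1 ∈ V) (hv2 : v2 ∈ V) (hne : v1 ≠ v2)
    (hsupp : ∀ x y, H.Adj x y → x ∈ V ∧ y ∈ V)
    (cc : ℕ) (hcc1 : 1 ≤ cc)
    (hcc : cc = Set.ncard {C : (H.induce (V : Set (Fin n))).ConnectedComponent |
        (⟨v1, by simpa using hv1⟩ : (V : Set (Fin n))) ∉ C.supp ∧
        (⟨v2, by simpa using hv2⟩ : (V : Set (Fin n))) ∉ C.supp})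
    (A : Set (Fin n → Fin K))
    (hA : A = {z | (∀ x y, H.Adj x y → z x = z y) ∧ z v1 = z v2})
    (hApos : (PMF.uniformOfFintype (Fin n → Fin K)).toMeasure A ≠ 0) :
    (∀ z ∈ A, (V.image z).card - 1 ≤ cc) ∧
      ∀ x : ℕ, x ≤ cc →
        (PMF.uniformOfFintype (Fin n → Fin K)).toMeasure[|A]
            {z | (V.image z).card - 1 = x}
          ≤ (cc : ENNReal) ^ cc * ((K : ENNReal) ^ (cc - x))⁻¹ := by
  classical
  set μ := (PMF.uniformOfFintype (Fin n → Fin K)).toMeasure with hμ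
  have hT : (Stmt13Aux.T' H V v1 v2 hv1 hv2).card = cc := by
    rw [hcc, Set.ncard_eq_toFinset_card _ (Set.toFinite _)]
    rfl
  constructor
  · intro z hz
    rw [hA] at hz
    obtain ⟨hz1, hz2⟩ := hz
    rw [Stmt13Aux.card_image_eq hv1 hv2 hz1 hz2, Nat.add_sub_cancel]
    exact hT ▸ Stmt13Aux.Dz_card_le hv1 hv2 z
  · intro x hx
    have hAmeas : MeasurableSet A := (Set.toFinite A).measurableSet
    rcases eq_or_lt_of_le hx with heq | hxlt
    · subst heq
      have hP : MeasureTheory.IsProbabilityMeasure (μ[|A]) :=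
        ProbabilityTheory.cond_isProbabilityMeasure hApos
      calc μ[|A] {z | (V.image z).card - 1 = x}
          ≤ 1 := MeasureTheory.prob_le_one
        _ ≤ (x : ENNReal) ^ x * ((K : ENNReal) ^ (x - x))⁻¹ := by
            simp only [Nat.sub_self, pow_zero, inv_one, mul_one]
            exact one_le_pow_of_one_le' (by exact_mod_cast hcc1) x
    · -- measure formula
      have hmeas : ∀ S : Set (Fin n → Fin K), μ S =
          ((Finset.univ.filter (· ∈ S)).card : ENNReal) *
            ((Fintype.card (Fin n → Fin K) : ENNReal))⁻¹ := by
        intro S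
        have hSrw : S = ↑(Finset.univ.filter (· ∈ S)) := by ext a; simp
        rw [hμ, hSrw, PMF.toMeasure_apply_finset]
        simp [PMF.uniformOfFintype_apply, mul_comm]
      set E := {z : Fin n → Fin K | (V.image z).card - 1 = x} with hE
      have hAE : ∀ z : Fin n → Fin K, z ∈ A ∩ E ↔
          ((∀ a b, H.Adj a b → z a = z b) ∧ z v1 = z v2) ∧
            (Stmt13Aux.Dz H V v1 v2 hv1 hv2 z).card = x := by
        intro z
        simp only [Set.mem_inter_iff, hA, hE, Set.mem_setOf_eq]
        constructor
        · rintro ⟨⟨h1, h2⟩, h3⟩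
          refine ⟨⟨h1, h2⟩, ?_⟩
          rwa [Stmt13Aux.card_image_eq hv1 hv2 h1 h2, Nat.add_sub_cancel] at h3
        · rintro ⟨⟨h1, h2⟩, h3⟩
          refine ⟨⟨h1, h2⟩, ?_⟩
          rw [Stmt13Aux.card_image_eq hv1 hv2 h1 h2, Nat.add_sub_cancel]
          exact h3
      set a := (@Finset.filter _ (fun z => z ∈ A ∩ E)
        (fun z => Classical.propDecidable _) Finset.univ).card with ha
      set b := (@Finset.filter _ (fun z => z ∈ A)
        (fun z => Classical.propDecidable _) Finset.univ).card with hb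
      have hacard : a = (Finset.univ.filter (fun z : Fin n → Fin K =>
          ((∀ p q, H.Adj p q → z p = z q) ∧ z v1 = z v2) ∧
            (Stmt13Aux.Dz H V v1 v2 hv1 hv2 z).card = x)).card := by
        rw [ha]
        congr 1
        ext z
        simp only [Finset.mem_filter, Finset.mem_univ, true_and]
        exact hAE z
      have hbcard : b = (Finset.univ.filter (fun z : Fin n → Fin K =>
          (∀ p q, H.Adj p q → z p = z q) ∧ z v1 = z v2)).card := by
        rw [hb]
        congr 1
        ext z
        simp only [Finset.mem_filter, Finset.mem_univ, true_and]
        rw [hA]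
        exact Iff.rfl
      -- the counting inequality
      have hcount : a * K ^ cc ≤ b * ((x + 1) ^ cc * K ^ x) := by
        rw [hacard, hbcard, ← hT]
        exact Stmt13Aux.count_ineq hv1 hv2 (K := K) x hsupp
      have h1 : (x + 1) ^ cc ≤ cc ^ cc := Nat.pow_le_pow_left hxlt cc
      have h2 : a * K ^ cc ≤ b * (cc ^ cc * K ^ x) :=
        le_trans hcount (Nat.mul_le_mul_left _ (Nat.mul_le_mul_right _ h1))
      have hKx : 0 < K ^ x := Nat.pow_pos (Nat.pos_of_ne_zero (NeZero.ne K))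
      have hnat : a * K ^ (cc - x) ≤ cc ^ cc * b := by
        have hsplit : K ^ (cc - x) * K ^ x = K ^ cc := pow_sub_mul_pow K hx
        apply Nat.le_of_mul_le_mul_right _ hKx
        calc a * K ^ (cc - x) * K ^ x = a * (K ^ (cc - x) * K ^ x) := by ring
          _ = a * K ^ cc := by rw [hsplit]
          _ ≤ b * (cc ^ cc * K ^ x) := h2
          _ = cc ^ cc * b * K ^ x := by ring
      -- ENNReal arithmetic
      have hNc0 : ((Fintype.card (Fin n → Fin K) : ENNReal)) ≠ 0 :=
        Nat.cast_ne_zero.mpr Fintype.card_ne_zero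
      have hNctop : ((Fintype.card (Fin n → Fin K) : ENNReal)) ≠ ⊤ :=
        ENNReal.natCast_ne_top _
      have hb0 : ((b : ENNReal)) ≠ 0 := by
        intro h0
        apply hApos
        rw [hmeas A, ← hb, h0, zero_mul]
      have hbtop : ((b : ENNReal)) ≠ ⊤ := by simp
      rw [ProbabilityTheory.cond_apply hAmeas, hmeas A, hmeas (A ∩ E)]
      rw [← ha, ← hb]
      have hsimp : (((b : ENNReal)) * ((Fintype.card (Fin n → Fin K) : ENNReal))⁻¹)⁻¹ *
          (((a : ENNReal)) * ((Fintype.card (Fin n → Fin K) : ENNReal))⁻¹) =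
          (a : ENNReal) * ((b : ENNReal))⁻¹ := by
        rw [ENNReal.mul_inv (Or.inl hb0) (Or.inl hbtop), inv_inv]
        calc ((b : ENNReal))⁻¹ * (Fintype.card (Fin n → Fin K) : ENNReal) *
              ((a : ENNReal) * ((Fintype.card (Fin n → Fin K) : ENNReal))⁻¹)
            = (a : ENNReal) * ((b : ENNReal))⁻¹ *
              ((Fintype.card (Fin n → Fin K) : ENNReal) *
                ((Fintype.card (Fin n → Fin K) : ENNReal))⁻¹) := by ring
          _ = (a : ENNReal) * ((b : ENNReal))⁻¹ := by
              rw [ENNReal.mul_inv_cancel hNc0 hNctop, mul_one]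
      rw [hsimp]
      have hK0' : ((K : ENNReal) ^ (cc - x)) ≠ 0 := by
        apply pow_ne_zero
        exact_mod_cast (NeZero.ne K)
      have hKtop' : ((K : ENNReal) ^ (cc - x)) ≠ ⊤ := by
        apply ENNReal.pow_ne_top
        simp
      have hnat' : (a : ENNReal) * (K : ENNReal) ^ (cc - x) ≤
          (cc : ENNReal) ^ cc * (b : ENNReal) := by
        have := hnat
        exact_mod_cast Nat.cast_le.mpr hnat
      calc (a : ENNReal) * ((b : ENNReal))⁻¹
          = (a : ENNReal) * ((K : ENNReal) ^ (cc - x) * ((K : ENNReal) ^ (cc - x))⁻¹) *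
            ((b : ENNReal))⁻¹ := by
            rw [ENNReal.mul_inv_cancel hK0' hKtop', mul_one]
        _ = ((a : ENNReal) * (K : ENNReal) ^ (cc - x)) * ((K : ENNReal) ^ (cc - x))⁻¹ *
            ((b : ENNReal))⁻¹ := by ring
        _ ≤ ((cc : ENNReal) ^ cc * (b : ENNReal)) * ((K : ENNReal) ^ (cc - x))⁻¹ *
            ((b : ENNReal))⁻¹ := by
            gcongr
        _ = (cc : ENNReal) ^ cc * ((K : ENNReal) ^ (cc - x))⁻¹ *
            ((b : ENNReal) * ((b : ENNReal))⁻¹) := by ring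
        _ ≤ (cc : ENNReal) ^ cc * ((K : ENNReal) ^ (cc - x))⁻¹ := by
            rw [ENNReal.mul_inv_cancel hb0 hbtop, mul_one]
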